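/- Let G be a group, q an element of G, and l a list of elements of G. Suppose each position of l is marked with one of two tags, K or ∅, and assume that every ∅-tagged element of l commutes with q and commutes with every K-tagged element of l. Let l_K be the sublist of K-tagged elements of l (in order). Writing w(m) for the product of a list m of group elements taken with the last element of m as the leftmost factor (i.e., w(m) = (reverse of m).prod), we have w(l) * q * w(l)⁻¹ = w(l_K) * q * w(l_K)⁻¹. -/

import Mathlib

/-- Let `l` be a list of queries (group elements), each tagged `K` (`true`) or
`∅` (`false`). If every `∅`-tagged element commutes with `q` and with every
`K`-tagged element of `l`, then conjugating `q` by the product of `l` (last element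
leftmost) equals conjugating `q` by the product of the `K`-tagged sublist. -/
theorem stmt_7 {G : Type*} [Group G] (q : G) (l : List (G × Bool))
    (hq : ∀ x ∈ l, x.2 = false → Commute x.1 q)
    (hK : ∀ x ∈ l, x.2 = false → ∀ y ∈ l, y.2 = true → Commute x.1 y.1) :
    (l.map Prod.fst).reverse.prod * q * ((l.map Prod.fst).reverse.prod)⁻¹ =
      ((l.filter (fun x => x.2)).map Prod.fst).reverse.prod * q *
        (((l.filter (fun x => x.2)).map Prod.fst).reverse.prod)⁻¹ := by
  induction l generalizing q with
  | nil => simp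
  | cons a l ih =>
    rcases a with ⟨g, b⟩
    cases b with
    | false =>
      have hgq : Commute g q := hq (g, false) List.mem_cons_self rfl
      simp only [List.filter_cons, List.map_cons, List.reverse_cons, List.prod_append,
        List.prod_cons, List.prod_nil, mul_one]
      norm_num
      rw [← mul_inv_rev]
      try rw [← mul_inv_rev]
      have key : (l.map Prod.fst).reverse.prod * g * q * ((l.map Prod.fst).reverse.prod * g)⁻¹
          = (l.map Prod.fst).reverse.prod * q * ((l.map Prod.fst).reverse.prod)⁻¹ := by
        rw [mul_inv_rev, mul_assoc ((l.map Prod.fst).reverse.prod) g q]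
        rw [hgq.eq]
        group
      rw [key]
      exact ih q (fun x hx h => hq x (List.mem_cons_of_mem _ hx) h)
        (fun x hx h y hy hy' => hK x (List.mem_cons_of_mem _ hx) h y (List.mem_cons_of_mem _ hy) hy')
    | true =>
      simp only [List.filter_cons, List.map_cons, List.reverse_cons, List.prod_append,
        List.prod_cons, List.prod_nil, mul_one]
      norm_num
      rw [← mul_inv_rev]
      try rw [← mul_inv_rev]
      have hq' : ∀ x ∈ l, x.2 = false → Commute x.1 (g * q * g⁻¹) := by
        intro x hx h
        have h1 := hq x (List.mem_cons_of_mem _ hx) h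
        have h2 := hK x (List.mem_cons_of_mem _ hx) h (g, true) List.mem_cons_self rfl
        exact (h2.mul_right h1).mul_right h2.inv_right
      have := ih (g * q * g⁻¹) hq'
        (fun x hx h y hy hy' => hK x (List.mem_cons_of_mem _ hx) h y (List.mem_cons_of_mem _ hy) hy')
      calc (l.map Prod.fst).reverse.prod * g * q * ((l.map Prod.fst).reverse.prod * g)⁻¹
          = (l.map Prod.fst).reverse.prod * (g * q * g⁻¹) * ((l.map Prod.fst).reverse.prod)⁻¹ := by
            group
        _ = ((l.filter (fun x => x.2)).map Prod.fst).reverse.prod * (g * q * g⁻¹) *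
            (((l.filter (fun x => x.2)).map Prod.fst).reverse.prod)⁻¹ := this
        _ = ((l.filter (fun x => x.2)).map Prod.fst).reverse.prod * g * q *
            (((l.filter (fun x => x.2)).map Prod.fst).reverse.prod * g)⁻¹ := by group
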